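/- For the ESN distribution (ESEP with α = 2), the asymptotic variance of the ML estimator of θ is Var(θ̂) = 2(α+1)Γ(1+1/α)Γ(1/α)σ²(1−ε²) / (αn[Γ(1+1/α)Γ(1−1/α)α² − Γ(1−1/α)Γ(1+1/α) − α²]) evaluated at α = 2, which equals the (1,1)-entry of the inverse of the Fisher information matrix for (θ,σ,ε). -/

import Mathlib

open Real

lemma inv00_aux (a b c d : ℝ) (hb : b ≠ 0) (h : a * d - c * c ≠ 0) :
    (!![a, 0, c; 0, b, 0; c, 0, d])⁻¹ 0 0 = d / (a * d - c * c) := by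
  rw [Matrix.inv_def, Ring.inverse_eq_inv', Matrix.adjugate_fin_three, Matrix.det_fin_three]
  norm_num [Matrix.smul_apply, Matrix.cons_val_two]
  rw [show a * b * d - c * b * c = b * (a * d - c * c) by ring, mul_inv]
  field_simp

/-- The Fisher information matrix of ESEP(θ,σ,ε,α) for (θ,σ,ε), scaled by sample size n. -/
noncomputable def esepFisher (n α σ ε : ℝ) : Matrix (Fin 3) (Fin 3) ℝ :=
  n • !![α * (α - 1) * Real.Gamma (1 - 1 / α) / (2 * σ ^ 2 * Real.Gamma (1 / α) * (1 - ε ^ 2)), 0,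
        α ^ 2 / (Real.sqrt 2 * σ * Real.Gamma (1 / α) * (1 - ε ^ 2));
      0, -1 / σ ^ 2 + α * (α + 1) * Real.Gamma (1 + 1 / α) / (Real.Gamma (1 / α) * σ ^ 2), 0;
      α ^ 2 / (Real.sqrt 2 * σ * Real.Gamma (1 / α) * (1 - ε ^ 2)), 0,
        α * (α + 1) * Real.Gamma (1 + 1 / α) / (Real.Gamma (1 / α) * (1 - ε ^ 2))]

/-- For ESN (ESEP with α = 2), the asymptotic variance of the ML estimator of θ, i.e. the
(1,1)-entry of the inverse Fisher information matrix, is given by the stated formula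
evaluated at α = 2. -/
theorem esn_asymptotic_variance_theta (n σ ε : ℝ) (hn : 0 < n) (hσ : 0 < σ)
    (hε : ε ∈ Set.Ioo (-1 : ℝ) 1) :
    (esepFisher n 2 σ ε)⁻¹ 0 0 =
      2 * (2 + 1) * Real.Gamma (1 + 1 / 2) * Real.Gamma (1 / 2) * σ ^ 2 * (1 - ε ^ 2) /
        (2 * n * (Real.Gamma (1 + 1 / 2) * Real.Gamma (1 - 1 / 2) * 2 ^ 2 -
          Real.Gamma (1 - 1 / 2) * Real.Gamma (1 + 1 / 2) - 2 ^ 2)) := by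
  obtain ⟨hε1, hε2⟩ := hε
  have h1 : (0:ℝ) < 1 - ε^2 := by nlinarith
  have hπ3 : (3:ℝ) < π := Real.pi_gt_three
  have hπ : (0:ℝ) < π := Real.pi_pos
  have hsπ : (0:ℝ) < Real.sqrt π := Real.sqrt_pos.mpr hπ
  have hs2 : (0:ℝ) < Real.sqrt 2 := by positivity
  have hsπ2 : Real.sqrt π ^ 2 = π := Real.sq_sqrt hπ.le
  have hs22 : Real.sqrt 2 ^ 2 = 2 := Real.sq_sqrt (by norm_num)
  have hG12 : Real.Gamma (1/2) = Real.sqrt π := Real.Gamma_one_half_eq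
  have hG32 : Real.Gamma (1 + 1/2) = Real.sqrt π / 2 := by
    rw [add_comm, Real.Gamma_add_one (by norm_num), hG12]; ring
  have hG32' : Real.Gamma (3/2 : ℝ) = Real.sqrt π / 2 := by
    rw [show (3/2 : ℝ) = 1 + 1/2 by norm_num, hG32]
  have hGm : Real.Gamma (1 - 1/2 : ℝ) = Real.sqrt π := by norm_num [hG12]
  have hA : esepFisher n 2 σ ε =
      !![n / (σ ^ 2 * (1 - ε ^ 2)), 0, 4 * n / (Real.sqrt 2 * σ * Real.sqrt π * (1 - ε ^ 2));
        0, 2 * n / σ ^ 2, 0;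
        4 * n / (Real.sqrt 2 * σ * Real.sqrt π * (1 - ε ^ 2)), 0, 3 * n / (1 - ε ^ 2)] := by
    unfold esepFisher
    norm_num [hG12, hG32, hG32', hGm]
    refine ⟨⟨?_, ?_⟩, ?_, ?_, ?_⟩ <;> field_simp <;> ring
  have hc2 : 4 * n / (Real.sqrt 2 * σ * Real.sqrt π * (1 - ε ^ 2)) *
      (4 * n / (Real.sqrt 2 * σ * Real.sqrt π * (1 - ε ^ 2))) =
      8 * n ^ 2 / (σ ^ 2 * π * (1 - ε ^ 2) ^ 2) := by
    rw [div_mul_div_comm, show Real.sqrt 2 * σ * Real.sqrt π * (1 - ε ^ 2) *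
        (Real.sqrt 2 * σ * Real.sqrt π * (1 - ε ^ 2)) =
        Real.sqrt 2 ^ 2 * Real.sqrt π ^ 2 * (σ ^ 2 * (1 - ε ^ 2) ^ 2) by ring, hs22, hsπ2]
    rw [div_eq_div_iff (by positivity) (by positivity)]
    ring
  have hkey : n / (σ ^ 2 * (1 - ε ^ 2)) * (3 * n / (1 - ε ^ 2)) -
      4 * n / (Real.sqrt 2 * σ * Real.sqrt π * (1 - ε ^ 2)) *
      (4 * n / (Real.sqrt 2 * σ * Real.sqrt π * (1 - ε ^ 2))) =
      n ^ 2 * (3 * π - 8) / (π * σ ^ 2 * (1 - ε ^ 2) ^ 2) := by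
    rw [hc2, div_mul_div_comm, div_sub_div _ _ (by positivity) (by positivity),
      div_eq_div_iff (by positivity) (by positivity)]
    ring
  have hpos : (0:ℝ) < n ^ 2 * (3 * π - 8) / (π * σ ^ 2 * (1 - ε ^ 2) ^ 2) :=
    div_pos (mul_pos (pow_pos hn 2) (by linarith)) (by positivity)
  have hbr : Real.sqrt π / 2 * Real.sqrt π * 2 ^ 2 - Real.sqrt π * (Real.sqrt π / 2) - 2 ^ 2 =
      (3 * π - 8) / 2 := by
    rw [show Real.sqrt π / 2 * Real.sqrt π * 2 ^ 2 - Real.sqrt π * (Real.sqrt π / 2) - 2 ^ 2 =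
      3 / 2 * Real.sqrt π ^ 2 - 4 by ring, hsπ2]; ring
  have hnum : 2 * (2 + 1) * (Real.sqrt π / 2) * Real.sqrt π * σ ^ 2 * (1 - ε ^ 2) =
      3 * π * σ ^ 2 * (1 - ε ^ 2) := by
    rw [show 2 * (2 + 1) * (Real.sqrt π / 2) * Real.sqrt π * σ ^ 2 * (1 - ε ^ 2) =
      3 * Real.sqrt π ^ 2 * σ ^ 2 * (1 - ε ^ 2) by ring, hsπ2]
  rw [hA, inv00_aux _ _ _ _ (by positivity) (by rw [hkey]; exact hpos.ne'), hkey,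
    hG12, hG32, hGm, hbr, hnum]
  rw [div_eq_div_iff hpos.ne' (by
    have : (0:ℝ) < 2 * n * ((3 * π - 8) / 2) := by nlinarith
    exact this.ne')]
  field_simp
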